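/- If f is a continuous 3-convex function on an interval I, then f is differentiable on the interior of I, and for every a in int I and every x ≥ a in I, f(x) ≥ f(a) + (x-a) f'(a) + ((x-a)²/2) f''₊(a), where f''₊(a) is the right second derivative (right derivative of the convex function f'). -/

import Mathlib

open Set Filter Topology

noncomputable def divDiff3 (f : ℝ → ℝ) (x0 x1 x2 x3 : ℝ) : ℝ :=
  f x0 / ((x0 - x1) * (x0 - x2) * (x0 - x3)) +
  f x1 / ((x1 - x0) * (x1 - x2) * (x1 - x3)) +
  f x2 / ((x2 - x0) * (x2 - x1) * (x2 - x3)) +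
  f x3 / ((x3 - x0) * (x3 - x1) * (x3 - x2))

noncomputable def dd2 (f : ℝ → ℝ) (x y z : ℝ) : ℝ :=
  f x / ((x - y) * (x - z)) + f y / ((y - x) * (y - z)) + f z / ((z - x) * (z - y))

lemma divDiff3_swap01 (f : ℝ → ℝ) (a b c d : ℝ) : divDiff3 f a b c d = divDiff3 f b a c d := by
  unfold divDiff3; ring

lemma divDiff3_swap12 (f : ℝ → ℝ) (a b c d : ℝ) : divDiff3 f a b c d = divDiff3 f a c b d := by
  unfold divDiff3; ring

lemma divDiff3_swap23 (f : ℝ → ℝ) (a b c d : ℝ) : divDiff3 f a b c d = divDiff3 f a b d c := by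
  unfold divDiff3; ring

lemma dd2_swap12 (f : ℝ → ℝ) (x y z : ℝ) : dd2 f x y z = dd2 f x z y := by
  unfold dd2; ring

lemma dd2_swap01 (f : ℝ → ℝ) (x y z : ℝ) : dd2 f x y z = dd2 f y x z := by
  unfold dd2; ring

lemma slope_diff_eq (g : ℝ → ℝ) {x y z : ℝ} (hxy : x ≠ y) (hyz : y ≠ z) (hxz : x ≠ z) :
    (g z - g y) / (z - y) - (g y - g x) / (y - x) = (z - x) * dd2 g x y z := by
  have h1 : x - y ≠ 0 := sub_ne_zero.2 hxy
  have h2 : y - z ≠ 0 := sub_ne_zero.2 hyz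
  have h3 : x - z ≠ 0 := sub_ne_zero.2 hxz
  have h1' : y - x ≠ 0 := sub_ne_zero.2 hxy.symm
  have h2' : z - y ≠ 0 := sub_ne_zero.2 hyz.symm
  have h3' : z - x ≠ 0 := sub_ne_zero.2 hxz.symm
  unfold dd2
  field_simp
  ring

lemma scalar4 {c x y z : ℝ} (h4 : x - c ≠ 0) (h5 : y - c ≠ 0) (h6 : z - c ≠ 0)
    (h1 : x - y ≠ 0) (h2 : y - z ≠ 0) (h3 : x - z ≠ 0) :
    1/((c-x)*(c-y)*(c-z)) + 1/((x-c)*(x-y)*(x-z)) + 1/((y-c)*(y-x)*(y-z))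
      + 1/((z-c)*(z-x)*(z-y)) = 0 := by
  have h4' : c - x ≠ 0 := fun h => h4 (by linarith [sub_eq_zero.1 h])
  have h5' : c - y ≠ 0 := fun h => h5 (by linarith [sub_eq_zero.1 h])
  have h6' : c - z ≠ 0 := fun h => h6 (by linarith [sub_eq_zero.1 h])
  have h1' : y - x ≠ 0 := fun h => h1 (by linarith [sub_eq_zero.1 h])
  have h2' : z - y ≠ 0 := fun h => h2 (by linarith [sub_eq_zero.1 h])
  have h3' : z - x ≠ 0 := fun h => h3 (by linarith [sub_eq_zero.1 h])
  field_simp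
  ring

lemma dd2_slope_fn (f : ℝ → ℝ) {c x y z : ℝ} (hcx : c ≠ x) (hcy : c ≠ y) (hcz : c ≠ z)
    (hxy : x ≠ y) (hyz : y ≠ z) (hxz : x ≠ z) :
    dd2 (fun t => (f t - f c) / (t - c)) x y z = divDiff3 f c x y z := by
  have h4 : x - c ≠ 0 := sub_ne_zero.2 hcx.symm
  have h5 : y - c ≠ 0 := sub_ne_zero.2 hcy.symm
  have h6 : z - c ≠ 0 := sub_ne_zero.2 hcz.symm
  have h1 : x - y ≠ 0 := sub_ne_zero.2 hxy
  have h2 : y - z ≠ 0 := sub_ne_zero.2 hyz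
  have h3 : x - z ≠ 0 := sub_ne_zero.2 hxz
  unfold dd2 divDiff3
  have key := scalar4 h4 h5 h6 h1 h2 h3
  have e1 : ((f x - f c) / (x - c)) / ((x - y) * (x - z))
      = f x / ((x-c)*(x-y)*(x-z)) - f c * (1/((x-c)*(x-y)*(x-z))) := by
    rw [div_div, sub_div]; ring
  have e2 : ((f y - f c) / (y - c)) / ((y - x) * (y - z))
      = f y / ((y-c)*(y-x)*(y-z)) - f c * (1/((y-c)*(y-x)*(y-z))) := by
    rw [div_div, sub_div]; ring
  have e3 : ((f z - f c) / (z - c)) / ((z - x) * (z - y))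
      = f z / ((z-c)*(z-x)*(z-y)) - f c * (1/((z-c)*(z-x)*(z-y))) := by
    rw [div_div, sub_div]; ring
  rw [e1, e2, e3]
  have ec : f c / ((c - x) * (c - y) * (c - z)) = f c * (1/((c-x)*(c-y)*(c-z))) := by ring
  rw [ec]
  have goal2 : f c * (1/((c-x)*(c-y)*(c-z))) = - (f c * (1/((x-c)*(x-y)*(x-z)))
      + f c * (1/((y-c)*(y-x)*(y-z))) + f c * (1/((z-c)*(z-x)*(z-y)))) := by
    have := congrArg (f c * ·) key
    simp only [mul_add, mul_zero] at this
    linarith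
  rw [goal2]
  ring

lemma dd2_move3 (f : ℝ → ℝ) {x y z w : ℝ} (hxy : x ≠ y) (hxz : x ≠ z) (hyz : y ≠ z)
    (hxw : x ≠ w) (hyw : y ≠ w) (hzw : z ≠ w) :
    dd2 f x y w - dd2 f x y z = (w - z) * divDiff3 f x y z w := by
  have h1 : x - y ≠ 0 := sub_ne_zero.2 hxy
  have h2 : x - z ≠ 0 := sub_ne_zero.2 hxz
  have h3 : y - z ≠ 0 := sub_ne_zero.2 hyz
  have h4 : x - w ≠ 0 := sub_ne_zero.2 hxw
  have h5 : y - w ≠ 0 := sub_ne_zero.2 hyw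
  have h6 : z - w ≠ 0 := sub_ne_zero.2 hzw
  have h1' : y - x ≠ 0 := sub_ne_zero.2 hxy.symm
  have h2' : z - x ≠ 0 := sub_ne_zero.2 hxz.symm
  have h3' : z - y ≠ 0 := sub_ne_zero.2 hyz.symm
  have h4' : w - x ≠ 0 := sub_ne_zero.2 hxw.symm
  have h5' : w - y ≠ 0 := sub_ne_zero.2 hyw.symm
  have h6' : w - z ≠ 0 := sub_ne_zero.2 hzw.symm
  unfold dd2 divDiff3
  have cx : 1/((x-y)*(x-w)) - 1/((x-y)*(x-z)) = (w-z) * (1/((x-y)*(x-z)*(x-w))) := by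
    field_simp; ring
  have cy : 1/((y-x)*(y-w)) - 1/((y-x)*(y-z)) = (w-z) * (1/((y-x)*(y-z)*(y-w))) := by
    field_simp; ring
  have cz : (0:ℝ) - 1/((z-x)*(z-y)) = (w-z) * (1/((z-x)*(z-y)*(z-w))) := by
    field_simp; ring
  have cw : 1/((w-x)*(w-y)) - 0 = (w-z) * (1/((w-x)*(w-y)*(w-z))) := by
    field_simp; ring
  linear_combination f x * cx + f y * cy + f z * cz + f w * cw

lemma dd2_psi (f : ℝ → ℝ) {h : ℝ} (x y z : ℝ) :
    dd2 (fun t => (f (t + h) - f t) / h) x y z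
      = (dd2 f (x+h) (y+h) (z+h) - dd2 f x y z) / h := by
  unfold dd2
  ring
lemma gc_convexOn {I : Set ℝ} (f : ℝ → ℝ)
    (hconv : ∀ x0 x1 x2 x3 : ℝ, x0 ∈ I → x1 ∈ I → x2 ∈ I → x3 ∈ I →
      x0 < x1 → x1 < x2 → x2 < x3 → 0 ≤ divDiff3 f x0 x1 x2 x3)
    {c p q : ℝ} (hcI : c ∈ I) (hsub : Ioo p q ⊆ I) (hc : c ∉ Ioo p q) :
    ConvexOn ℝ (Ioo p q) (fun t => (f t - f c) / (t - c)) := by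
  refine convexOn_of_slope_mono_adjacent (convex_Ioo p q) ?_
  intro x y z hx hz hxy hyz
  have hy : y ∈ Ioo p q := ⟨hx.1.trans hxy, hyz.trans hz.2⟩
  have hcx : c ≠ x := fun h => hc (h ▸ hx)
  have hcy : c ≠ y := fun h => hc (h ▸ hy)
  have hcz : c ≠ z := fun h => hc (h ▸ hz)
  have key : 0 ≤ divDiff3 f c x y z := by
    rcases lt_or_ge c x with h | h
    · exact hconv c x y z hcI (hsub hx) (hsub hy) (hsub hz) h hxy hyz
    · have hzc : z < c := by
        rcases lt_or_ge c q with h' | h'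
        · exact absurd (show c ∈ Ioo p q from ⟨lt_of_lt_of_le hx.1 h, h'⟩) hc
        · exact hz.2.trans_le h'
      rw [divDiff3_swap01, divDiff3_swap12, divDiff3_swap23]
      exact hconv x y z c (hsub hx) (hsub hy) (hsub hz) hcI hxy hyz hzc
  set g := fun t => (f t - f c) / (t - c) with hg
  have hdd : dd2 g x y z = divDiff3 f c x y z :=
    dd2_slope_fn f hcx hcy hcz hxy.ne hyz.ne (hxy.trans hyz).ne
  have hid := slope_diff_eq g hxy.ne hyz.ne (hxy.trans hyz).ne
  have hnn : 0 ≤ (z - x) * dd2 g x y z :=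
    mul_nonneg (by linarith [hxy.trans hyz]) (hdd ▸ key)
  linarith

lemma onesided {g : ℝ → ℝ} {p q a : ℝ} (hg : ConvexOn ℝ (Ioo p q) g)
    (ha : a ∈ Ioo p q) :
    ∃ dl du : ℝ, dl ≤ du ∧ HasDerivWithinAt g dl (Iio a) a ∧
      HasDerivWithinAt g du (Ioi a) a := by
  set m := fun y => (g y - g a) / (y - a) with hm
  have hsec : ∀ s ∈ Ioo p q, ∀ t ∈ Ioo p q, s ≠ a → t ≠ a → s ≤ t → m s ≤ m t :=
    fun s hs t ht hsa hta hst => hg.secant_mono ha hs ht hsa hta hst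
  have hmemL : ((p + a)/2) ∈ Ioo p a := ⟨by linarith [ha.1], by linarith [ha.1]⟩
  have hmemR : ((a + q)/2) ∈ Ioo a q := ⟨by linarith [ha.2], by linarith [ha.2]⟩
  have hLsub : Ioo p a ⊆ Ioo p q := Ioo_subset_Ioo le_rfl ha.2.le
  have hRsub : Ioo a q ⊆ Ioo p q := Ioo_subset_Ioo ha.1.le le_rfl
  have monoR : MonotoneOn m (Ioo a q) := fun s hs t ht hst =>
    hsec s (hRsub hs) t (hRsub ht) (ne_of_gt hs.1) (ne_of_gt ht.1) hst
  have monoL : MonotoneOn m (Ioo p a) := fun s hs t ht hst =>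
    hsec s (hLsub hs) t (hLsub ht) (ne_of_lt hs.2) (ne_of_lt ht.2) hst
  have bddR : BddBelow (m '' Ioo a q) := by
    refine ⟨m ((p + a)/2), fun b hb => ?_⟩
    obtain ⟨t, ht, rfl⟩ := hb
    exact hsec _ (hLsub hmemL) t (hRsub ht) (ne_of_lt hmemL.2) (ne_of_gt ht.1)
      (by linarith [hmemL.2, ht.1])
  have bddL : BddAbove (m '' Ioo p a) := by
    refine ⟨m ((a + q)/2), fun b hb => ?_⟩
    obtain ⟨s, hs, rfl⟩ := hb
    exact hsec s (hLsub hs) _ (hRsub hmemR) (ne_of_lt hs.2) (ne_of_gt hmemR.1)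
      (by linarith [hs.2, hmemR.1])
  have tendR : Tendsto m (𝓝[>] a) (𝓝 (sInf (m '' Ioo a q))) :=
    MonotoneOn.tendsto_nhdsWithin_Ioo_right ⟨_, hmemR⟩ monoR bddR
  have tendL : Tendsto m (𝓝[<] a) (𝓝 (sSup (m '' Ioo p a))) :=
    MonotoneOn.tendsto_nhdsWithin_Ioo_left ⟨_, hmemL⟩ monoL bddL
  have hslope : (slope g a) = m := by
    funext y; rw [slope_def_field]
  refine ⟨sSup (m '' Ioo p a), sInf (m '' Ioo a q), ?_, ?_, ?_⟩
  · refine csSup_le (⟨_, mem_image_of_mem _ hmemL⟩) fun b hb => ?_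
    obtain ⟨s, hs, rfl⟩ := hb
    refine le_csInf (⟨_, mem_image_of_mem _ hmemR⟩) fun b' hb' => ?_
    obtain ⟨t, ht, rfl⟩ := hb'
    exact hsec s (hLsub hs) t (hRsub ht) (ne_of_lt hs.2) (ne_of_gt ht.1)
      (by linarith [hs.2, ht.1])
  · rw [hasDerivWithinAt_iff_tendsto_slope, hslope]
    have : Iio a \ {a} = Iio a := diff_singleton_eq_self (fun h => lt_irrefl a h)
    rw [this]
    exact tendL
  · rw [hasDerivWithinAt_iff_tendsto_slope, hslope]
    have : Ioi a \ {a} = Ioi a := diff_singleton_eq_self (fun h => lt_irrefl a h)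
    rw [this]
    exact tendR
theorem stmt13 (I : Set ℝ) (hI : I.OrdConnected) (f : ℝ → ℝ)
    (hcont : ContinuousOn f I)
    (hconv : ∀ x0 x1 x2 x3 : ℝ, x0 ∈ I → x1 ∈ I → x2 ∈ I → x3 ∈ I →
      x0 < x1 → x1 < x2 → x2 < x3 → 0 ≤ divDiff3 f x0 x1 x2 x3) :
    ∃ f' : ℝ → ℝ,
      (∀ a ∈ interior I, HasDerivAt f (f' a) a) ∧
      ∀ a ∈ interior I, ∀ D : ℝ, HasDerivWithinAt f' D (Set.Ioi a) a →
        ∀ x ∈ I, a ≤ x →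
          f a + (x - a) * f' a + ((x - a) ^ 2 / 2) * D ≤ f x := by
  -- Step 1 : differentiability on the interior
  have hdiff : ∀ a ∈ interior I, HasDerivAt f (deriv f a) a := by
    intro a ha
    suffices h : DifferentiableAt ℝ f a from h.hasDerivAt
    obtain ⟨ε, hε, hball⟩ := Metric.isOpen_iff.1 isOpen_interior a ha
    rw [Real.ball_eq_Ioo] at hball
    obtain ⟨u, hu1, hu2⟩ : ∃ u, a - ε < u ∧ u < a := ⟨a - ε/2, by linarith, by linarith⟩
    obtain ⟨v, hv1, hv2⟩ : ∃ v, a < v ∧ v < a + ε := ⟨a + ε/2, by linarith, by linarith⟩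
    have hsub : Ioo u v ⊆ I := fun t ht =>
      interior_subset (hball ⟨by linarith [ht.1], by linarith [ht.2]⟩)
    have huI : u ∈ I := interior_subset (hball ⟨by linarith, by linarith⟩)
    have hvI : v ∈ I := interior_subset (hball ⟨by linarith, by linarith⟩)
    have hauv : a ∈ Ioo u v := ⟨hu2, hv1⟩
    obtain ⟨gu, hgu'⟩ : ∃ g : ℝ → ℝ, g = fun t => (f t - f u) / (t - u) := ⟨_, rfl⟩
    obtain ⟨gv, hgv'⟩ : ∃ g : ℝ → ℝ, g = fun t => (f t - f v) / (t - v) := ⟨_, rfl⟩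
    have hgu : ConvexOn ℝ (Ioo u v) gu := by
      rw [hgu']; exact gc_convexOn f hconv huI hsub (fun h => lt_irrefl u h.1)
    have hgv : ConvexOn ℝ (Ioo u v) gv := by
      rw [hgv']; exact gc_convexOn f hconv hvI hsub (fun h => lt_irrefl v h.2)
    obtain ⟨dl, du, hldu, hL, hR⟩ := onesided hgu hauv
    obtain ⟨el, eu, hleu, hL', hR'⟩ := onesided hgv hauv
    have hmemIoo : Ioo u v ∈ 𝓝 a := isOpen_Ioo.mem_nhds hauv
    have repu : ∀ t ∈ Ioo u v, f t = f u + (t - u) * gu t := by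
      intro t ht
      have h : t - u ≠ 0 := sub_ne_zero.2 (ne_of_gt ht.1)
      rw [hgu']
      field_simp
      ring
    have repv : ∀ t ∈ Ioo u v, f t = f v + (t - v) * gv t := by
      intro t ht
      have h : t - v ≠ 0 := sub_ne_zero.2 (ne_of_lt ht.2)
      rw [hgv']
      field_simp
      ring
    have mkR : ∀ (c : ℝ) (g : ℝ → ℝ) (d : ℝ), (∀ t ∈ Ioo u v, f t = f c + (t - c) * g t) →
        HasDerivWithinAt g d (Ioi a) a →
        HasDerivWithinAt f (g a + (a - c) * d) (Ioi a) a := by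
      intro c g d hrep hgd
      have hF : HasDerivWithinAt (fun t => f c + (t - c) * g t)
          (1 * g a + (a - c) * d) (Ioi a) a :=
        (((hasDerivWithinAt_id a (Ioi a)).sub_const c).mul hgd).const_add (f c)
      have heq : f =ᶠ[𝓝[Ioi a] a] (fun t => f c + (t - c) * g t) :=
        eventuallyEq_of_mem (mem_nhdsWithin_of_mem_nhds hmemIoo) (fun t ht => hrep t ht)
      have := hF.congr_of_eventuallyEq heq (hrep a hauv)
      simpa using this
    have mkL : ∀ (c : ℝ) (g : ℝ → ℝ) (d : ℝ), (∀ t ∈ Ioo u v, f t = f c + (t - c) * g t) →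
        HasDerivWithinAt g d (Iio a) a →
        HasDerivWithinAt f (g a + (a - c) * d) (Iio a) a := by
      intro c g d hrep hgd
      have hF : HasDerivWithinAt (fun t => f c + (t - c) * g t)
          (1 * g a + (a - c) * d) (Iio a) a :=
        (((hasDerivWithinAt_id a (Iio a)).sub_const c).mul hgd).const_add (f c)
      have heq : f =ᶠ[𝓝[Iio a] a] (fun t => f c + (t - c) * g t) :=
        eventuallyEq_of_mem (mem_nhdsWithin_of_mem_nhds hmemIoo) (fun t ht => hrep t ht)
      have := hF.congr_of_eventuallyEq heq (hrep a hauv)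
      simpa using this
    have hfRu := mkR u gu du repu hR
    have hfLu := mkL u gu dl repu hL
    have hfRv := mkR v gv eu repv hR'
    have hfLv := mkL v gv el repv hL'
    have eqR : gu a + (a - u) * du = gv a + (a - v) * eu := by
      rw [← hfRu.derivWithin (uniqueDiffWithinAt_Ioi a),
        ← hfRv.derivWithin (uniqueDiffWithinAt_Ioi a)]
    have eqL : gu a + (a - u) * dl = gv a + (a - v) * el := by
      rw [← hfLu.derivWithin (uniqueDiffWithinAt_Iio a),
        ← hfLv.derivWithin (uniqueDiffWithinAt_Iio a)]
    have hau : 0 < a - u := by linarith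
    have hav : a - v < 0 := by linarith
    have hLR : gu a + (a - u) * dl = gu a + (a - u) * du := by
      have h1 : gu a + (a - u) * dl ≤ gu a + (a - u) * du := by nlinarith
      have h2 : gv a + (a - v) * eu ≤ gv a + (a - v) * el := by nlinarith
      linarith [eqR, eqL]
    have hfin : HasDerivWithinAt f (gu a + (a - u) * du) (Iio a) a := hLR ▸ hfLu
    have huniv := (hfin.Iic_of_Iio).union (hfRu.Ici_of_Ioi)
    rw [Iic_union_Ici, hasDerivWithinAt_univ] at huniv
    exact huniv.differentiableAt
  -- Step 2 : convexity of deriv f on the interior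
  have hJconv : Convex ℝ (interior I) := hI.convex.interior
  have hFconv : ConvexOn ℝ (interior I) (deriv f) := by
    refine convexOn_of_slope_mono_adjacent hJconv ?_
    intro x y z hx hz hxy hyz
    have hy : y ∈ interior I :=
      (convex_iff_ordConnected.1 hJconv).out hx hz ⟨hxy.le, hyz.le⟩
    have hxI : x ∈ I := interior_subset hx
    have hyI : y ∈ I := interior_subset hy
    have hzI : z ∈ I := interior_subset hz
    obtain ⟨δ, hδ, hball⟩ := Metric.isOpen_iff.1 isOpen_interior z hz
    rw [Real.ball_eq_Ioo] at hball
    obtain ⟨h0, hh0pos, hh1, hh2, hh3⟩ :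
        ∃ h0, 0 < h0 ∧ h0 ≤ δ ∧ h0 ≤ y - x ∧ h0 ≤ z - y := by
      refine ⟨min δ (min (y - x) (z - y)), ?_, min_le_left _ _,
        le_trans (min_le_right _ _) (min_le_left _ _),
        le_trans (min_le_right _ _) (min_le_right _ _)⟩
      simp only [lt_min_iff]
      exact ⟨hδ, by linarith, by linarith⟩
    have key : ∀ h ∈ Ioo (0:ℝ) h0,
        ((f (y+h) - f y)/h - (f (x+h) - f x)/h)/(y - x)
          ≤ ((f (z+h) - f z)/h - (f (y+h) - f y)/h)/(z - y) := by
      intro h hh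
      obtain ⟨hpos, hlt⟩ := hh
      have hxh : x + h ∈ I := hI.out hxI hzI ⟨by linarith, by linarith⟩
      have hyh : y + h ∈ I := hI.out hyI hzI ⟨by linarith, by linarith⟩
      have hzh : z + h ∈ I := interior_subset (hball ⟨by linarith, by linarith⟩)
      have o1 : x < x + h := by linarith
      have o2 : x + h < y := by linarith
      have o3 : y < y + h := by linarith
      have o4 : y + h < z := by linarith
      have o5 : z < z + h := by linarith
      have hxyz : x < z := hxy.trans hyz
      have D1 : dd2 f x y z ≤ dd2 f x y (z+h) := by
        have hd := dd2_move3 f hxy.ne hxyz.ne hyz.ne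
          (ne_of_lt (by linarith : x < z+h)) (ne_of_lt (by linarith : y < z+h)) (ne_of_lt o5)
        have hnn : 0 ≤ (z + h - z) * divDiff3 f x y z (z+h) :=
          mul_nonneg (by linarith)
            (hconv x y z (z+h) hxI hyI hzI hzh hxy hyz o5)
        linarith
      have D2 : dd2 f x y (z+h) ≤ dd2 f x (y+h) (z+h) := by
        have e1 : dd2 f x y (z+h) = dd2 f x (z+h) y := dd2_swap12 f x y (z+h)
        have e2 : dd2 f x (y+h) (z+h) = dd2 f x (z+h) (y+h) := dd2_swap12 f x (y+h) (z+h)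
        have hd := dd2_move3 f (ne_of_lt (by linarith : x < z+h)) hxy.ne
          (ne_of_gt (by linarith : z + h > y)) (ne_of_lt (by linarith : x < y+h))
          (ne_of_gt (by linarith : z + h > y + h)) (ne_of_lt o3)
        have eperm : divDiff3 f x (z+h) y (y+h) = divDiff3 f x y (y+h) (z+h) := by
          rw [divDiff3_swap12, divDiff3_swap23]
        rw [eperm] at hd
        have hnn : 0 ≤ (y + h - y) * divDiff3 f x y (y+h) (z+h) :=
          mul_nonneg (by linarith)
            (hconv x y (y+h) (z+h) hxI hyI hyh hzh hxy o3 (by linarith))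
        linarith
      have D3 : dd2 f x (y+h) (z+h) ≤ dd2 f (x+h) (y+h) (z+h) := by
        have e1 : dd2 f x (y+h) (z+h) = dd2 f (y+h) (z+h) x := by
          rw [dd2_swap01, dd2_swap12]
        have e2 : dd2 f (x+h) (y+h) (z+h) = dd2 f (y+h) (z+h) (x+h) := by
          rw [dd2_swap01, dd2_swap12]
        have hd := dd2_move3 f (ne_of_lt (by linarith : y + h < z + h))
          (ne_of_gt (by linarith : y + h > x)) (ne_of_gt (by linarith : z + h > x))
          (ne_of_gt (by linarith : y + h > x + h)) (ne_of_gt (by linarith : z + h > x + h))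
          (ne_of_lt o1)
        have eperm : divDiff3 f (y+h) (z+h) x (x+h) = divDiff3 f x (x+h) (y+h) (z+h) := by
          rw [divDiff3_swap12, divDiff3_swap01, divDiff3_swap23, divDiff3_swap12]
        rw [eperm] at hd
        have hnn : 0 ≤ (x + h - x) * divDiff3 f x (x+h) (y+h) (z+h) :=
          mul_nonneg (by linarith)
            (hconv x (x+h) (y+h) (z+h) hxI hxh hyh hzh o1 (by linarith) (by linarith))
        linarith
      have hsd : ((f (z+h) - f z)/h - (f (y+h) - f y)/h)/(z - y)
            - ((f (y+h) - f y)/h - (f (x+h) - f x)/h)/(y - x)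
          = (z - x) * dd2 (fun t => (f (t+h) - f t)/h) x y z :=
        slope_diff_eq (fun t => (f (t+h) - f t)/h) hxy.ne hyz.ne hxyz.ne
      rw [dd2_psi f x y z] at hsd
      have hnn : 0 ≤ (z - x) * ((dd2 f (x+h) (y+h) (z+h) - dd2 f x y z)/h) :=
        mul_nonneg (by linarith) (div_nonneg (by linarith) hpos.le)
      linarith
    have lim : ∀ w ∈ interior I,
        Tendsto (fun h => (f (w+h) - f w)/h) (𝓝[>] (0:ℝ)) (𝓝 (deriv f w)) := by
      intro w hw
      have h1 := hasDerivAt_iff_tendsto_slope.1 (hdiff w hw)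
      have hmap : Tendsto (fun h : ℝ => w + h) (𝓝[>] (0:ℝ)) (𝓝[≠] w) := by
        apply tendsto_nhdsWithin_of_tendsto_nhds_of_eventually_within
        · have h2 : Tendsto (fun h : ℝ => w + h) (𝓝 0) (𝓝 (w + 0)) :=
            (continuous_const.add continuous_id).tendsto 0
          rw [add_zero] at h2
          exact h2.mono_left nhdsWithin_le_nhds
        · filter_upwards [self_mem_nhdsWithin] with h hh
          simp only [mem_compl_iff, mem_singleton_iff]
          have : 0 < h := hh
          intro hcon
          have : h = 0 := by linarith [congrArg (fun r => r - w) hcon, add_sub_cancel_left w h]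
          linarith
      have h3 := h1.comp hmap
      refine h3.congr fun h => ?_
      simp only [Function.comp_apply, slope_def_field, add_sub_cancel_left]
    have limL : Tendsto (fun h => ((f (y+h) - f y)/h - (f (x+h) - f x)/h)/(y - x))
        (𝓝[>] (0:ℝ)) (𝓝 ((deriv f y - deriv f x)/(y - x))) :=
      ((lim y hy).sub (lim x hx)).div_const _
    have limR : Tendsto (fun h => ((f (z+h) - f z)/h - (f (y+h) - f y)/h)/(z - y))
        (𝓝[>] (0:ℝ)) (𝓝 ((deriv f z - deriv f y)/(z - y))) :=
      ((lim z hz).sub (lim y hy)).div_const _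
    exact le_of_tendsto_of_tendsto limL limR
      (eventually_of_mem (Ioo_mem_nhdsGT hh0pos) key)
  -- Step 3 : the inequality
  refine ⟨deriv f, hdiff, ?_⟩
  intro a ha D hD x hx hax
  rcases eq_or_lt_of_le hax with rfl | hax'
  · simp
  obtain ⟨ε, hε, hball⟩ := Metric.isOpen_iff.1 isOpen_interior a ha
  rw [Real.ball_eq_Ioo] at hball
  obtain ⟨a', ha'1, ha'2⟩ : ∃ a', a - ε < a' ∧ a' < a := ⟨a - ε/2, by linarith, by linarith⟩
  have ha'I : a' ∈ I := interior_subset (hball ⟨ha'1, by linarith⟩)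
  have haI : a ∈ I := interior_subset ha
  have hIoo2 : Ioo a x ⊆ interior I := by
    have hIoo' : Ioo a' x ⊆ I := fun t ht => hI.out ha'I hx ⟨ht.1.le, ht.2.le⟩
    exact fun t ht => interior_maximal hIoo' isOpen_Ioo ⟨ha'2.trans ht.1, ht.2⟩
  have hslope : ∀ t ∈ Ioo a x, deriv f a + (t - a) * D ≤ deriv f t := by
    intro t ht
    have htJ : t ∈ interior I := hIoo2 ht
    have tendstoD : Tendsto (fun s => (deriv f s - deriv f a)/(s - a)) (𝓝[>] a) (𝓝 D) := by
      have h1 := hasDerivWithinAt_iff_tendsto_slope.1 hD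
      have h2 : Ioi a \ {a} = Ioi a := diff_singleton_eq_self (fun hc => lt_irrefl a hc)
      rw [h2] at h1
      exact h1.congr fun s => slope_def_field _ _ _
    have hev : ∀ᶠ s in 𝓝[>] a,
        (deriv f s - deriv f a)/(s - a) ≤ (deriv f t - deriv f a)/(t - a) := by
      filter_upwards [Ioo_mem_nhdsGT_of_mem (⟨le_refl a, ht.1⟩ : a ∈ Ico a t)] with s hs
      exact hFconv.secant_mono ha (hIoo2 ⟨hs.1, hs.2.trans ht.2⟩) htJ
        (ne_of_gt hs.1) (ne_of_gt ht.1) hs.2.le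
    have hDle := le_of_tendsto tendstoD hev
    rw [le_div_iff₀ (by linarith [ht.1] : (0:ℝ) < t - a)] at hDle
    linarith
  obtain ⟨φ, hφ⟩ : ∃ φ : ℝ → ℝ,
      φ = fun t => f t - ((t - a) * deriv f a + (t - a)^2/2 * D) := ⟨_, rfl⟩
  have hIcc : Icc a x ⊆ I := fun t ht => hI.out haI hx ht
  have hφcont : ContinuousOn φ (Icc a x) := by
    rw [hφ]
    exact (hcont.mono hIcc).sub (Continuous.continuousOn (by continuity))
  have hφderiv : ∀ t ∈ Ioo a x,
      HasDerivAt φ (deriv f t - (deriv f a + (t - a) * D)) t := by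
    intro t ht
    have h1 : HasDerivAt (fun t : ℝ => t - a) 1 t := (hasDerivAt_id t).sub_const a
    have h2 : HasDerivAt (fun t : ℝ => (t - a) * deriv f a) (deriv f a) t := by
      simpa using h1.mul_const (deriv f a)
    have h3 : HasDerivAt (fun t : ℝ => (t - a)^2/2*D) ((t - a) * D) t := by
      have h4 := ((h1.pow 2).div_const 2).mul_const D
      exact h4.congr_deriv (by ring)
    rw [hφ]
    exact (hdiff t (hIoo2 ht)).sub (h2.add h3)
  have hdOn : DifferentiableOn ℝ φ (interior (Icc a x)) := by
    rw [interior_Icc]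
    exact fun t ht => ((hφderiv t ht).differentiableAt).differentiableWithinAt
  have hnn : ∀ t ∈ interior (Icc a x), 0 ≤ deriv φ t := by
    rw [interior_Icc]
    intro t ht
    rw [(hφderiv t ht).deriv]
    linarith [hslope t ht]
  have hmono := monotoneOn_of_deriv_nonneg (convex_Icc a x) hφcont hdOn hnn
  have hax'' := hmono (left_mem_Icc.2 hax) (right_mem_Icc.2 hax) hax
  rw [hφ] at hax''
  have h2 : f a - ((a - a) * deriv f a + (a - a)^2/2*D)
      ≤ f x - ((x - a) * deriv f a + (x - a)^2/2*D) := hax''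
  norm_num at h2
  linarith
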